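/- The proper subclosure relation is well-founded: there is no infinite descending chain of direct subclosure steps ⦃L₁,T₁⦄ → ⦃L₂,T₂⦄ → ⋯. Equivalently, the transitive closure of the direct subclosure relation on closures (environment, term) is well-founded. -/

import Mathlib

inductive Bk | abbr | abst
deriving DecidableEq

inductive Fk | appl | cast
deriving DecidableEq

inductive Tm
| sort : Nat → Tm
| lref : Nat → Tm
| bind : Bk → Tm → Tm → Tm
| flat : Fk → Tm → Tm → Tm
deriving DecidableEq

inductive Lift : Nat → Nat → Tm → Tm → Prop
| sort (l m k) : Lift l m (.sort k) (.sort k)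
| lt {l m i} : i < l → Lift l m (.lref i) (.lref i)
| ge {l m i} : l ≤ i → Lift l m (.lref i) (.lref (i + m))
| bind {l m b W₁ W₂ T₁ T₂} : Lift l m W₁ W₂ → Lift (l + 1) m T₁ T₂ →
    Lift l m (.bind b W₁ T₁) (.bind b W₂ T₂)
| flat {l m f V₁ V₂ T₁ T₂} : Lift l m V₁ V₂ → Lift l m T₁ T₂ →
    Lift l m (.flat f V₁ T₁) (.flat f V₂ T₂)

inductive Env
| null : Env
| pair : Env → Bk → Tm → Env
deriving DecidableEq

inductive Drop : Nat → Nat → Env → Env → Prop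
| atom (l) : Drop l 0 .null .null
| pair {L₁ L₂ b W} : Drop 0 0 L₁ L₂ → Drop 0 0 (.pair L₁ b W) (.pair L₂ b W)
| drop {m L₁ L₂ b W} : Drop 0 m L₁ L₂ → Drop 0 (m + 1) (.pair L₁ b W) L₂
| skip {l m L₁ L₂ b W₁ W₂} : Drop l m L₁ L₂ → Lift l m W₂ W₁ →
    Drop (l + 1) m (.pair L₁ b W₁) (.pair L₂ b W₂)

inductive Fqu : Env → Tm → Env → Tm → Prop
| bindL {L b V T} : Fqu L (.bind b V T) L V
| flatL {L f V T} : Fqu L (.flat f V T) L V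
| flatR {L f V T} : Fqu L (.flat f V T) L T
| bindR {L b W T} : Fqu L (.bind b W T) (.pair L b W) T
| lref {K b W} : Fqu (.pair K b W) (.lref 0) K W
| drop {L K T U m} : Drop 0 (m + 1) L K → Lift 0 (m + 1) T U → Fqu L U K T


def tw : Tm → Nat
| .sort _ => 1
| .lref _ => 1
| .bind _ W T => tw W + tw T + 2
| .flat _ V T => tw V + tw T + 2

def ew : Env → Nat
| .null => 0
| .pair L _ W => ew L + tw W + 1

theorem lift_tw {l m T U} (h : Lift l m T U) : tw T = tw U := by
  induction h <;> simp [tw, *]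

theorem drop_ew {l m L K} (h : Drop l m L K) :
    ew K ≤ ew L ∧ (0 < m → ew K < ew L) := by
  induction h with
  | atom => simp
  | pair _ ih => simp [ew]; omega
  | drop _ ih => simp [ew]; omega
  | skip _ hl ih => simp [ew, lift_tw hl] at *; omega

theorem fqu_lt {L T K U} (h : Fqu L T K U) : ew K + tw U < ew L + tw T := by
  cases h with
  | bindL => simp [tw]; omega
  | flatL => simp [tw]; omega
  | flatR => simp [tw]; omega
  | bindR => simp [tw, ew]; omega
  | lref => simp [tw, ew]
  | drop hd hl =>
      have := drop_ew hd
      have := lift_tw hl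
      omega

theorem fqu_wf :
    WellFounded (Relation.TransGen
      (fun p q : Env × Tm => Fqu q.1 q.2 p.1 p.2)) := by
  have h : WellFounded (fun p q : Env × Tm => Fqu q.1 q.2 p.1 p.2) := by
    apply Subrelation.wf (r := InvImage (· < ·) (fun p : Env × Tm => ew p.1 + tw p.2))
    · intro p q h; exact fqu_lt h
    · exact InvImage.wf _ (Nat.lt_wfRel.wf)
  exact h.transGen
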